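/- Let u, u₁, u₂, z be words over {a,b}, let w₁ = u·a·u₁ and w₂ = u·b·u₂. Then m(w̄₁·a·z·b·w₂) ≥ m(w̄₁·b·z̄·a·w₂), with equality if and only if u₁ and u₂ are both empty. -/
import Mathlib


def A : Matrix (Fin 2) (Fin 2) ℤ := !![1,1;1,2]
def B : Matrix (Fin 2) (Fin 2) ℤ := !![2,1;1,1]
/-- matrix of a word: `false` is the letter `a`, `true` is the letter `b` -/
def Mw (w : List Bool) : Matrix (Fin 2) (Fin 2) ℤ :=
  (w.map (fun x => if x then B else A)).prod
/-- the m-value: the top-right entry -/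
def mval (w : List Bool) : ℤ := Mw w 0 1
def U : Matrix (Fin 2) (Fin 2) ℤ := !![0,-1;1,0]
def J : Matrix (Fin 2) (Fin 2) ℤ := !![0,1;1,0]
/-- reversal with letters exchanged -/
def Ebar (w : List Bool) : List Bool := (w.map (fun x => !x)).reverse
def pell : ℕ → ℕ
  | 0 => 0
  | 1 => 1
  | n+2 => 2 * pell (n+1) + pell n

open Matrix

lemma Mw_nil : Mw [] = 1 := rfl
lemma Mw_append (v w : List Bool) : Mw (v ++ w) = Mw v * Mw w := by
  simp [Mw]
lemma Mw_cons (x : Bool) (w : List Bool) : Mw (x :: w) = (if x then B else A) * Mw w := by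
  simp [Mw]
lemma Mw_singleton (x : Bool) : Mw [x] = (if x then B else A) := by simp [Mw]

lemma A_symm : Aᵀ = A := by ext i j; fin_cases i <;> fin_cases j <;> rfl
lemma B_symm : Bᵀ = B := by ext i j; fin_cases i <;> fin_cases j <;> rfl

lemma Mw_reverse (w : List Bool) : Mw w.reverse = (Mw w)ᵀ := by
  induction w with
  | nil => simp [Mw_nil]
  | cons x w ih =>
    rw [List.reverse_cons, Mw_append, ih, Mw_cons x w, transpose_mul, Mw_cons x [], Mw_nil, mul_one]
    congr 1
    cases x <;> simp [A_symm, B_symm]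

lemma Mw_entries (w : List Bool) :
    1 ≤ Mw w 0 0 ∧ 0 ≤ Mw w 0 1 ∧ 0 ≤ Mw w 1 0 ∧ 1 ≤ Mw w 1 1 := by
  induction w with
  | nil => norm_num [Mw_nil, Matrix.one_apply]
  | cons x w ih =>
    obtain ⟨h1, h2, h3, h4⟩ := ih
    rw [Mw_cons]
    cases x <;>
      simp [A, B, Matrix.mul_apply, Fin.sum_univ_two] <;>
      refine ⟨by linarith, by linarith, by linarith, by linarith⟩

lemma Mw_off (w : List Bool) (h : w ≠ []) : 1 ≤ Mw w 0 1 ∧ 1 ≤ Mw w 1 0 := by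
  cases w with
  | nil => exact absurd rfl h
  | cons x t =>
    obtain ⟨h1, h2, h3, h4⟩ := Mw_entries t
    rw [Mw_cons]
    cases x <;>
      simp [A, B, Matrix.mul_apply, Fin.sum_univ_two] <;>
      exact ⟨by linarith, by linarith⟩

lemma Mw_det (w : List Bool) : (Mw w).det = 1 := by
  induction w with
  | nil => simp [Mw_nil]
  | cons x w ih =>
    rw [Mw_cons, det_mul, ih, mul_one]
    cases x <;> simp [A, B, Matrix.det_fin_two_of]

theorem stmt12 (u u₁ u₂ z : List Bool) :
    mval ((u ++ [false] ++ u₁).reverse ++ [false] ++ z ++ [true] ++ (u ++ [true] ++ u₂)) ≥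
    mval ((u ++ [false] ++ u₁).reverse ++ [true] ++ z.reverse ++ [false] ++ (u ++ [true] ++ u₂)) ∧
    (mval ((u ++ [false] ++ u₁).reverse ++ [false] ++ z ++ [true] ++ (u ++ [true] ++ u₂)) =
     mval ((u ++ [false] ++ u₁).reverse ++ [true] ++ z.reverse ++ [false] ++ (u ++ [true] ++ u₂))
     ↔ u₁ = [] ∧ u₂ = []) := by
  obtain ⟨hu1, hu2, hu3, hu4⟩ := Mw_entries u
  obtain ⟨hp1, hp2, hp3, hp4⟩ := Mw_entries u₁
  obtain ⟨hq1, hq2, hq3, hq4⟩ := Mw_entries u₂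
  obtain ⟨hn1, hn2, hn3, hn4⟩ := Mw_entries z
  have hdet : Mw u 0 0 * Mw u 1 1 - Mw u 0 1 * Mw u 1 0 = 1 := by
    have := Mw_det u
    rwa [Matrix.det_fin_two] at this
  set F : ℤ := Mw z 0 0 + 3 * Mw z 1 0 + Mw z 1 1 with hF
  set G : ℤ := (Mw u₁ 0 0 + 3 * Mw u₁ 1 0) * Mw u₂ 0 1 + Mw u₁ 1 0 * Mw u₂ 1 1 with hG
  have key :
      mval ((u ++ [false] ++ u₁).reverse ++ [false] ++ z ++ [true] ++ (u ++ [true] ++ u₂)) -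
      mval ((u ++ [false] ++ u₁).reverse ++ [true] ++ z.reverse ++ [false] ++ (u ++ [true] ++ u₂)) =
      F * G := by
    simp only [mval, Mw_append, Mw_reverse, Matrix.transpose_mul, Mw_cons, Mw_nil, mul_one,
      A_symm, B_symm, if_true, if_false, Bool.false_eq_true, ite_false, ite_true]
    simp only [Matrix.mul_apply, Fin.sum_univ_two, Matrix.transpose_apply, hF, hG]
    simp only [A, B, Matrix.cons_val', Matrix.cons_val_zero, Matrix.cons_val_one,
      Matrix.head_cons, Matrix.empty_val', Matrix.cons_val_fin_one, Matrix.head_fin_const,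
      Matrix.of_apply]
    linear_combination (F * G) * hdet
  have hFpos : 0 < F := by rw [hF]; linarith
  have hGnonneg : 0 ≤ G := by rw [hG]; nlinarith
  constructor
  · nlinarith [mul_nonneg hFpos.le hGnonneg]
  · constructor
    · intro h
      have hFG : F * G = 0 := by linarith
      have hG0 : G = 0 := by
        rcases mul_eq_zero.1 hFG with h' | h'
        · exact absurd h' hFpos.ne'
        · exact h'
      constructor
      · by_contra h1
        obtain ⟨ho1, ho2⟩ := Mw_off u₁ h1
        rw [hG] at hG0; nlinarith
      · by_contra h2
        obtain ⟨ho1, ho2⟩ := Mw_off u₂ h2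
        rw [hG] at hG0; nlinarith
    · rintro ⟨rfl, rfl⟩
      have : G = 0 := by
        rw [hG]; simp [Mw_nil, Matrix.one_apply]
      rw [this, mul_zero] at key
      linarith
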